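/- (Intersection equations / Mendelsohn equations for polar space designs.) Let D be a t-(r,k,λ)_Q design and S a totally isotropic subspace of dimension s. Define the intersection numbers α_j = #{B ∈ D : dim(B ∩ S) = j} for j ∈ {0,…,k}. Then for every i ∈ {0,…,t}: ∑_{j=i}^{s} [j choose i]_q · α_j = [s choose i]_q · λ_i, where λ_i = λ · [r−i choose t−i]_Q / [k−i choose t−i]_q and [a choose b]_q is the Gaussian binomial coefficient. -/

import Mathlib

open Module Finset

/-- Gaussian binomial coefficient `[n choose k]_q`. -/
noncomputable def gaussBinom (q : ℚ) (n k : ℕ) : ℚ :=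
  ∏ i ∈ Finset.range k, (q ^ (n - i) - 1) / (q ^ (i + 1) - 1)

/-- The polar-space correction factor `∏_{i=m-j+1}^{m} (q^{i+ε} + 1)`. -/
noncomputable def polarFactor (q : ℚ) (ε : ℤ) (m j : ℕ) : ℚ :=
  ∏ i ∈ Finset.Icc (m - j + 1) m, (q ^ ((i : ℤ) + ε) + 1)

/-- `[m choose j]_Q`, the number of `j`-dim totally isotropic subspaces of a rank-`m`
polar space with parameter `ε`. -/
noncomputable def polarBinom (q : ℚ) (ε : ℤ) (m j : ℕ) : ℚ :=
  gaussBinom q m j * polarFactor q ε m j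

/-- Mendelsohn / intersection equations for polar space designs.
`D` is a `t`-`(r,k,lam)_Q` design: a set of `k`-dimensional totally isotropic subspaces
(`iso` being downward closed) such that every `i`-dimensional totally isotropic subspace
lies in exactly `lamseq i = lam·[r-i choose t-i]_Q/[k-i choose t-i]_q` blocks, `0 ≤ i ≤ t`.
For a totally isotropic subspace `S` of dimension `s` and `α_j = #{B ∈ D : dim(B ∩ S) = j}`,
we have `∑_{j=i}^{s} [j choose i]_q α_j = [s choose i]_q λ_i` for all `i ≤ t`. -/
lemma gaussBinom_eq_zero {q : ℚ} {n k : ℕ} (h : n < k) : gaussBinom q n k = 0 := by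
  refine Finset.prod_eq_zero (Finset.mem_range.2 h) ?_
  simp [Nat.sub_self]

section count

variable {F V : Type*} [Field F] [Fintype F] [AddCommGroup V] [Module F V]
  [FiniteDimensional F V] [Finite V]

/-- counting identity in ℕ -/
lemma card_subspaces_mul (i : ℕ) (hi : i ≤ finrank F V) :
    Nat.card {U : Submodule F V // finrank F ↥U = i} *
      ∏ l ∈ range i, (Fintype.card F ^ i - Fintype.card F ^ l)
    = ∏ l ∈ range i, (Fintype.card F ^ finrank F V - Fintype.card F ^ l) := by
  classical
  set T := {U : Submodule F V // finrank F ↥U = i}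
  set A := {s : Fin i → V // LinearIndependent F s}
  have hf : ∀ s : A, finrank F ↥(Submodule.span F (Set.range s.1)) = i := by
    intro s
    rw [finrank_span_eq_card s.2, Fintype.card_fin]
  let f : A → T := fun s => ⟨Submodule.span F (Set.range s.1), hf s⟩
  haveI : Fintype V := Fintype.ofFinite V
  -- fiber equivalence
  have fib : ∀ U : T, Nat.card {s : A // f s = U}
      = ∏ l ∈ range i, (Fintype.card F ^ i - Fintype.card F ^ l) := by
    intro U
    have e : {s : A // f s = U} ≃ {s' : Fin i → ↥U.1 // LinearIndependent F s'} :=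
      { toFun := fun s => ⟨fun l => ⟨s.1.1 l, by
          have : Submodule.span F (Set.range s.1.1) = U.1 := congrArg Subtype.val s.2
          exact this ▸ Submodule.subset_span ⟨l, rfl⟩⟩,
          LinearIndependent.of_comp U.1.subtype s.1.2⟩
        invFun := fun s' => ⟨⟨fun l => (s'.1 l : V),
            s'.2.map' U.1.subtype (Submodule.ker_subtype _)⟩, by
          apply Subtype.ext
          show Submodule.span F (Set.range fun l => (s'.1 l : V)) = U.1
          have h1 : Submodule.span F (Set.range s'.1) = ⊤ :=
            s'.2.span_eq_top_of_card_eq_finrank' (by simp [U.2])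
          have : (Set.range fun l => (s'.1 l : V)) = U.1.subtype '' Set.range s'.1 := by
            rw [← Set.range_comp]; rfl
          rw [this, ← Submodule.map_span, h1, Submodule.map_top, Submodule.range_subtype]⟩
        left_inv := fun s => by ext l; rfl
        right_inv := fun s' => by ext l; rfl }
    rw [Nat.card_congr e, card_linearIndependent (by rw [U.2]),
      ← Fin.prod_univ_eq_prod_range]
    simp [U.2]
  -- total count
  have tot : Nat.card A = ∏ l ∈ range i, (Fintype.card F ^ finrank F V - Fintype.card F ^ l) := by
    rw [card_linearIndependent hi, ← Fin.prod_univ_eq_prod_range]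
  haveI : Finite (Submodule F V) :=
    Finite.of_injective (fun U : Submodule F V => (U : Set V)) SetLike.coe_injective
  haveI := Fintype.ofFinite (Submodule F V)
  have key := Nat.card_congr (Equiv.sigmaFiberEquiv f).symm
  rw [tot] at key
  rw [key]
  simp only [Nat.card_eq_fintype_card]
  rw [Fintype.card_sigma,
    Finset.sum_congr rfl (fun U _ => by rw [← Nat.card_eq_fintype_card, fib U]),
    Finset.sum_const, Finset.card_univ, smul_eq_mul]

end count

section count2
variable {F V : Type*} [Field F] [Fintype F] [AddCommGroup V] [Module F V]
  [FiniteDimensional F V] [Finite V]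

lemma prod_pow_sub_eq (q : ℚ) (i m : ℕ) (him : i ≤ m) :
    ∏ l ∈ range i, (q ^ m - q ^ l)
      = (∏ l ∈ range i, q ^ l) * ∏ l ∈ range i, (q ^ (m - l) - 1) := by
  rw [← Finset.prod_mul_distrib]
  refine Finset.prod_congr rfl fun l hl => ?_
  rw [mul_sub, mul_one, ← pow_add]
  congr 2
  have := Finset.mem_range.1 hl
  omega

lemma card_subspaces_rat (i : ℕ) :
    (Nat.card {U : Submodule F V // finrank F ↥U = i} : ℚ)
      = gaussBinom (Fintype.card F) (finrank F V) i := by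
  set n := finrank F V with hn
  rcases lt_or_ge n i with h | h
  · haveI : IsEmpty {U : Submodule F V // finrank F ↥U = i} :=
      ⟨fun U => absurd (U.2 ▸ U.1.finrank_le) (not_le.2 h)⟩
    rw [Nat.card_of_isEmpty, gaussBinom_eq_zero h, Nat.cast_zero]
  · have hkey := card_subspaces_mul (F := F) (V := V) i h
    set q : ℚ := (Fintype.card F : ℚ) with hqdef
    have hq1 : (1 : ℚ) < q := by rw [hqdef]; exact_mod_cast Fintype.one_lt_card (α := F)
    have hq0 : (0 : ℚ) < q := lt_trans one_pos hq1
    have hcast : ∀ m : ℕ, i ≤ m → ((∏ l ∈ range i,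
        (Fintype.card F ^ m - Fintype.card F ^ l) : ℕ) : ℚ)
        = ∏ l ∈ range i, (q ^ m - q ^ l) := by
      intro m hm
      rw [Nat.cast_prod]
      refine Finset.prod_congr rfl fun l hl => ?_
      have hl' := Finset.mem_range.1 hl
      rw [Nat.cast_sub (Nat.pow_le_pow_right Fintype.card_pos (by omega))]
      push_cast
      rfl
    have hQ : (∏ l ∈ range i, q ^ l) ≠ 0 :=
      Finset.prod_ne_zero_iff.2 fun l _ => pow_ne_zero _ (ne_of_gt hq0)
    have hBd : (∏ m ∈ range i, (q ^ (m + 1) - 1)) ≠ 0 :=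
      Finset.prod_ne_zero_iff.2 fun m _ =>
        sub_ne_zero.2 (ne_of_gt (one_lt_pow₀ hq1 (Nat.succ_ne_zero m)))
    have hrefl : ∏ l ∈ range i, (q ^ (i - l) - 1)
        = ∏ m ∈ range i, (q ^ (m + 1) - 1) := by
      rw [← Finset.prod_range_reflect (fun m => q ^ (m + 1) - 1) i]
      refine Finset.prod_congr rfl fun l hl => ?_
      have := Finset.mem_range.1 hl
      congr 2
      omega
    have hgauss : gaussBinom q n i
        = (∏ l ∈ range i, (q ^ (n - l) - 1)) / ∏ m ∈ range i, (q ^ (m + 1) - 1) := by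
      rw [gaussBinom, Finset.prod_div_distrib]
    have hcastkey : (Nat.card {U : Submodule F V // finrank F ↥U = i} : ℚ)
        * ∏ l ∈ range i, (q ^ i - q ^ l) = ∏ l ∈ range i, (q ^ n - q ^ l) := by
      rw [← hcast i le_rfl, ← hcast n h, ← Nat.cast_mul, hkey]
    rw [prod_pow_sub_eq q i n h, prod_pow_sub_eq q i i le_rfl, hrefl] at hcastkey
    rw [hgauss, eq_div_iff hBd]
    refine mul_left_cancel₀ hQ ?_
    linear_combination hcastkey

lemma card_sub_subspaces (W : Submodule F V) (i : ℕ) :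
    (Nat.card {U : Submodule F V // U ≤ W ∧ finrank F ↥U = i} : ℚ)
      = gaussBinom (Fintype.card F) (finrank F ↥W) i := by
  have e : {U' : Submodule F ↥W // finrank F ↥U' = i}
      ≃ {U : Submodule F V // U ≤ W ∧ finrank F ↥U = i} :=
    (Equiv.subtypeEquiv (Submodule.MapSubtype.orderIso W).toEquiv (fun U' => by
      show finrank F ↥U' = i ↔ finrank F ↥(Submodule.map W.subtype U') = i
      rw [Submodule.finrank_map_subtype_eq])).trans
      (Equiv.subtypeSubtypeEquivSubtypeInter _ _)
  rw [← Nat.card_congr e, card_subspaces_rat]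
end count2

theorem polar_design_intersection_equations
    {F V : Type*} [Field F] [Fintype F] [AddCommGroup V] [Module F V]
    [FiniteDimensional F V]
    (q : ℚ) (hq : q = Fintype.card F)
    (r t k : ℕ) (ε : ℤ) (htk : t ≤ k) (hkr : k ≤ r)
    (iso : Submodule F V → Prop)
    (hdown : ∀ U W : Submodule F V, U ≤ W → iso W → iso U)
    (lam : ℕ) (lamseq : ℕ → ℕ)
    (hlamseq : ∀ i ≤ t, (lamseq i : ℚ)
      = lam * polarBinom q ε (r - i) (t - i) / gaussBinom q (k - i) (t - i))
    (D : Set (Submodule F V))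
    (hblocks : ∀ B ∈ D, iso B ∧ finrank F ↥B = k)
    (hdesign : ∀ i ≤ t, ∀ I : Submodule F V, iso I → finrank F ↥I = i →
      Nat.card {B : Submodule F V // B ∈ D ∧ I ≤ B} = lamseq i)
    (S : Submodule F V) (s : ℕ) (hS : iso S) (hs : finrank F ↥S = s)
    (i : ℕ) (hi : i ≤ t) :
    ∑ j ∈ Finset.Icc i s, gaussBinom q j i *
        (Nat.card {B : Submodule F V // B ∈ D ∧ finrank F ↥(B ⊓ S) = j} : ℚ)
      = gaussBinom q s i * lamseq i := by
  classical
  subst hq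
  haveI : Finite V := Module.finite_of_finite F
  haveI : Finite (Submodule F V) :=
    Finite.of_injective (fun U : Submodule F V => (U : Set V)) SetLike.coe_injective
  haveI : Fintype (Submodule F V) := Fintype.ofFinite _
  set qQ : ℚ := (Fintype.card F : ℚ) with hqQ
  set Dfin : Finset (Submodule F V) := Finset.univ.filter (· ∈ D) with hDfin
  set Is : Finset (Submodule F V) :=
    Finset.univ.filter (fun I => I ≤ S ∧ finrank F ↥I = i) with hIs
  -- α_j as a filter card
  have alpha_card : ∀ j : ℕ,
      (Nat.card {B : Submodule F V // B ∈ D ∧ finrank F ↥(B ⊓ S) = j} : ℕ)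
      = (Dfin.filter fun B => finrank F ↥(B ⊓ S) = j).card := by
    intro j
    rw [Nat.card_eq_fintype_card, Fintype.card_subtype, hDfin, Finset.filter_filter]
  -- step 1 : each I in Is lies in lamseq i blocks
  have step1 : ∀ I ∈ Is, (Dfin.filter fun B => I ≤ B).card = lamseq i := by
    intro I hI
    obtain ⟨hIS, hIr⟩ := (Finset.mem_filter.1 hI).2
    rw [← hdesign i hi I (hdown I S hIS hS) hIr, Nat.card_eq_fintype_card,
      Fintype.card_subtype, hDfin, Finset.filter_filter]
  -- step 2 : i-subspaces of B ⊓ S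
  have step2 : ∀ B : Submodule F V, ((Is.filter fun I => I ≤ B).card : ℚ)
      = gaussBinom qQ (finrank F ↥(B ⊓ S)) i := by
    intro B
    rw [← card_sub_subspaces (B ⊓ S) i, hIs, Finset.filter_filter]
    congr 2
    rw [Nat.card_eq_fintype_card, Fintype.card_subtype]
    congr 1
    apply Finset.filter_congr
    intro I _
    simp only [le_inf_iff]
    tauto
  -- double counting
  have swap : ∑ I ∈ Is, (Dfin.filter fun B => I ≤ B).card
      = ∑ B ∈ Dfin, (Is.filter fun I => I ≤ B).card := by
    simp_rw [Finset.card_filter]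
    exact Finset.sum_comm
  -- the LHS of swap
  have lhs_eq : ∑ I ∈ Is, (Dfin.filter fun B => I ≤ B).card = Is.card * lamseq i := by
    rw [Finset.sum_congr rfl step1, Finset.sum_const, smul_eq_mul]
  have Is_card : (Is.card : ℚ) = gaussBinom qQ s i := by
    rw [← hs, ← card_sub_subspaces S i, Nat.card_eq_fintype_card, Fintype.card_subtype, hIs]
  -- main identity in ℚ
  have main : gaussBinom qQ s i * (lamseq i : ℚ)
      = ∑ B ∈ Dfin, gaussBinom qQ (finrank F ↥(B ⊓ S)) i := by
    rw [← Is_card]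
    have := congrArg (fun n : ℕ => (n : ℚ)) (lhs_eq.symm.trans swap)
    push_cast at this
    rw [this]
    exact Finset.sum_congr rfl fun B _ => step2 B
  -- regroup the RHS by the dimension j of B ⊓ S
  have hmaps : ∀ B ∈ Dfin, finrank F ↥(B ⊓ S) ∈ Finset.range (s + 1) := by
    intro B _
    exact Finset.mem_range.2 (Nat.lt_succ_of_le (hs ▸ Submodule.finrank_mono inf_le_right))
  have grp := Finset.sum_fiberwise_of_maps_to hmaps
    (fun B => gaussBinom qQ (finrank F ↥(B ⊓ S)) i)
  have inner : ∀ j ∈ Finset.range (s + 1),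
      ∑ B ∈ Dfin.filter (fun B => finrank F ↥(B ⊓ S) = j),
        gaussBinom qQ (finrank F ↥(B ⊓ S)) i
      = gaussBinom qQ j i *
        (Nat.card {B : Submodule F V // B ∈ D ∧ finrank F ↥(B ⊓ S) = j} : ℚ) := by
    intro j _
    rw [Finset.sum_congr rfl (fun B hB => by
        rw [(Finset.mem_filter.1 hB).2]), Finset.sum_const, alpha_card j, nsmul_eq_mul,
      mul_comm]
  rw [Finset.sum_subset (fun j hj => Finset.mem_range.2
      (Nat.lt_succ_of_le (Finset.mem_Icc.1 hj).2))
    (fun j hj hj' => by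
      have hji : j < i := by
        have := Finset.mem_range.1 hj
        simp only [Finset.mem_Icc, not_and, not_le] at hj'
        by_contra hc
        omega
      rw [gaussBinom_eq_zero hji, zero_mul]),
    ← Finset.sum_congr rfl inner, grp, ← main]
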